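/- Let K be a function field of characteristic p, q a prime different from p, 𝔭 a prime (valuation) of K with ord_𝔭 t ≥ 0 and with ramification degree over F_p(t) not divisible by q. Then there exists a positive integer s̄ such that for all positive integers s divisible by s̄: ord_𝔭(t^{p^s} - t) > 0 and ord_𝔭(t^{p^s} - t) is not divisible by q. Moreover, if additionally ord_𝔭 f < 0 for some f ∈ K, then ord_𝔭((f^{q p^s} - f^q)/(t^{p^s} - t)) is not divisible by q. -/
import Mathlib

open Polynomial

lemma key_dvd (p : ℕ) (hp : p.Prime) (P : Polynomial (ZMod p)) (hPirr : Irreducible P)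
    (s : ℕ) (hdvd : P.natDegree ∣ s) : P ∣ (X ^ p ^ s - X : (ZMod p)[X]) := by
  haveI : Fact p.Prime := ⟨hp⟩
  haveI : Fact (Irreducible P) := ⟨hPirr⟩
  have hPne : P ≠ 0 := hPirr.ne_zero
  set F := AdjoinRoot P
  let pb := AdjoinRoot.powerBasis hPne
  haveI : Fintype F := Module.fintypeOfFintype pb.basis
  have hcard : Fintype.card F = p ^ P.natDegree := by
    rw [Module.card_eq_pow_finrank (K := ZMod p) (V := F), ZMod.card, pb.finrank,
      AdjoinRoot.powerBasis_dim]
  obtain ⟨k, rfl⟩ := hdvd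
  rw [← AdjoinRoot.mk_eq_zero, map_sub, map_pow, AdjoinRoot.mk_X, sub_eq_zero,
    pow_mul, ← hcard]
  exact FiniteField.pow_card_pow k _

set_option maxHeartbeats 1600000 in
/-- Let `K` be a function field of characteristic `p`, `q ≠ p` prime, and `v = ord_𝔭`
a discrete valuation of `K` lying (with ramification index `e`, `q ∤ e`) over the prime
of `F_p(t)` given by an irreducible polynomial `P` (so `𝔭` is not the pole of `t`,
and `v t ≥ 0`).  Then there is `s̄ > 0` such that for all `s > 0` divisible by `s̄`:
`v (t^{p^s} - t) > 0` and `q ∤ v (t^{p^s} - t)`; moreover for any `f` with `v f < 0`,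
`q ∤ v ((f^{q p^s} - f^q)/(t^{p^s} - t))`. -/
theorem stmt_12 (p q : ℕ) (hp : p.Prime) (hq : q.Prime) (hpq : p ≠ q)
    (K : Type*) [Field K] [CharP K p] [Algebra (ZMod p) K] (v : K → ℤ)
    (hmul : ∀ x y : K, x ≠ 0 → y ≠ 0 → v (x * y) = v x + v y)
    (hadd : ∀ x y : K, x ≠ 0 → y ≠ 0 → x + y ≠ 0 → min (v x) (v y) ≤ v (x + y))
    (t : K) (htrans : ∀ g : Polynomial (ZMod p), Polynomial.aeval t g = 0 → g = 0)
    (P : Polynomial (ZMod p)) (hPirr : Irreducible P)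
    (e : ℕ) (he : 0 < e) (heq : ¬ q ∣ e)
    (hbelow : ∀ (g : Polynomial (ZMod p)) (n : ℕ), g ≠ 0 → P ^ n ∣ g → ¬ P ^ (n + 1) ∣ g →
      v (Polynomial.aeval t g) = (e : ℤ) * n)
    (ht : 0 ≤ v t) :
    ∃ sbar : ℕ, 0 < sbar ∧ ∀ s : ℕ, 0 < s → sbar ∣ s →
      0 < v (t ^ p ^ s - t) ∧ ¬ ((q : ℤ) ∣ v (t ^ p ^ s - t)) ∧
        ∀ f : K, f ≠ 0 → v f < 0 →
          ¬ ((q : ℤ) ∣ v ((f ^ (q * p ^ s) - f ^ q) / (t ^ p ^ s - t))) := by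
  haveI : Fact p.Prime := ⟨hp⟩
  -- basic valuation facts
  have hv1 : v 1 = 0 := by
    have := hmul 1 1 one_ne_zero one_ne_zero
    simp at this; linarith
  have hvn1 : v (-1) = 0 := by
    have := hmul (-1) (-1) (by norm_num) (by norm_num)
    simp [hv1] at this; linarith
  have hvneg : ∀ x : K, x ≠ 0 → v (-x) = v x := by
    intro x hx
    have := hmul (-1) x (by norm_num) hx
    rw [neg_one_mul] at this
    rw [this, hvn1, zero_add]
  have hvpow : ∀ (x : K), x ≠ 0 → ∀ n : ℕ, v (x ^ n) = n * v x := by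
    intro x hx n
    induction n with
    | zero => simpa using hv1
    | succ n ih =>
      rw [pow_succ, hmul _ _ (pow_ne_zero _ hx) hx, ih]
      push_cast; ring
  have hstrict : ∀ x y : K, x ≠ 0 → y ≠ 0 → v x < v y → x + y ≠ 0 ∧ v (x + y) = v x := by
    intro x y hx hy hlt
    have hne : x + y ≠ 0 := by
      intro h
      have : y = -x := by linear_combination h
      rw [this, hvneg x hx] at hlt; exact lt_irrefl _ hlt
    refine ⟨hne, ?_⟩
    have h1 : v x ≤ v (x + y) := by
      have := hadd x y hx hy hne
      rwa [min_eq_left hlt.le] at this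
    have h2 : v (x + y) ≤ v x := by
      have hxy : (x + y) + (-y) = x := by ring
      have := hadd (x + y) (-y) hne (neg_ne_zero.mpr hy) (by rw [hxy]; exact hx)
      rw [hxy, hvneg y hy] at this
      by_contra hcon
      push_neg at hcon
      have : min (v (x + y)) (v y) ≤ v x := this
      rcases min_le_iff.mp this with h | h
      · linarith
      · linarith
    linarith
  have hvdiv : ∀ x y : K, x ≠ 0 → y ≠ 0 → v (x / y) = v x - v y := by
    intro x y hx hy
    have hxy : x / y ≠ 0 := div_ne_zero hx hy
    have := hmul (x / y) y hxy hy
    rw [div_mul_cancel₀ _ hy] at this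
    linarith
  -- choose sbar
  have hdpos : 0 < P.natDegree := hPirr.natDegree_pos
  refine ⟨P.natDegree, hdpos, ?_⟩
  intro s hs hsdvd
  set g : (ZMod p)[X] := X ^ p ^ s - X with hgdef
  have hg0 : g ≠ 0 :=
    FiniteField.X_pow_card_pow_sub_X_ne_zero (ZMod p) hs.ne' hp.one_lt
  have hP1 : P ∣ g := key_dvd p hp P hPirr s hsdvd
  have hsq : Squarefree g :=
    (galois_poly_separable p (p ^ s) (dvd_pow_self p hs.ne')).squarefree
  have hP2 : ¬ P ^ 2 ∣ g := by
    intro h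
    exact hPirr.not_isUnit (hsq P (by rwa [← sq]))
  have haev : Polynomial.aeval t g = t ^ p ^ s - t := by
    simp [hgdef]
  have hD0 : t ^ p ^ s - t ≠ 0 := by
    intro h
    exact hg0 (htrans g (by rw [haev, h]))
  have hvD : v (t ^ p ^ s - t) = (e : ℤ) := by
    have := hbelow g 1 hg0 (by rwa [pow_one]) (by norm_num; exact hP2)
    rw [haev] at this
    simpa using this
  refine ⟨by rw [hvD]; exact_mod_cast he, ?_, ?_⟩
  · rw [hvD]; exact_mod_cast heq
  · intro f hf hvf
    obtain ⟨u, hu⟩ : ∃ u, p ^ s = u + 1 :=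
      ⟨p ^ s - 1, (Nat.succ_pred_eq_of_pos (pow_pos hp.pos s)).symm⟩
    set m := q * u with hmdef
    have hnum : f ^ (q * p ^ s) - f ^ q = f ^ q * (f ^ m - 1) := by
      rw [mul_sub, mul_one, ← pow_add, hu, hmdef]; ring_nf
    have hfm : f ^ m ≠ 0 := pow_ne_zero _ hf
    have hvfm : v (f ^ m) = (m : ℤ) * v f := hvpow f hf m
    -- the second summand nonzero and valuation
    have hNq : v (f ^ (q * p ^ s) - f ^ q) = (q : ℤ) * v f + (m : ℤ) * v f ∧
        f ^ (q * p ^ s) - f ^ q ≠ 0 := by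
      by_cases hm0 : m = 0
      · -- then u = 0 impossible? u = p^s - 1 could be 0 only if p^s = 1, but s>0
        exfalso
        have : p ^ s ≠ 1 := Nat.one_lt_pow hs.ne' hp.one_lt |>.ne'
        rcases Nat.mul_eq_zero.mp hm0 with h | h
        · exact hq.ne_zero h
        · omega
      · have hmlt : v (f ^ m) < v (-1 : K) := by
          rw [hvfm, hvn1]
          have : (0 : ℤ) < (m : ℤ) := by exact_mod_cast Nat.pos_of_ne_zero hm0
          exact mul_neg_of_pos_of_neg this hvf
        obtain ⟨hne, hveq⟩ := hstrict (f ^ m) (-1) hfm (by norm_num) hmlt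
        have hne' : f ^ m - 1 ≠ 0 := by rwa [sub_eq_add_neg]
        have hveq' : v (f ^ m - 1) = (m : ℤ) * v f := by
          rw [sub_eq_add_neg, hveq, hvfm]
        constructor
        · rw [hnum, hmul _ _ (pow_ne_zero _ hf) hne', hvpow f hf q, hveq']
        · rw [hnum]
          exact mul_ne_zero (pow_ne_zero _ hf) hne'
    obtain ⟨hvN, hN0⟩ := hNq
    rw [hvdiv _ _ hN0 hD0, hvN, hvD]
    intro hdvd
    apply heq
    have hqm : (q : ℤ) ∣ (m : ℤ) := by exact_mod_cast dvd_mul_right q u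
    have h1 : (q : ℤ) ∣ (q : ℤ) * v f + (m : ℤ) * v f :=
      dvd_add (dvd_mul_right _ _) (hqm.mul_right _)
    have h2 : (q : ℤ) ∣ (e : ℤ) := by
      have := dvd_sub h1 hdvd
      simpa using this
    exact_mod_cast h2
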